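/- A 2n×2n Hermitian block matrix M = [[A, C],[C†, B]] (with A, B, C each n×n) is positive semidefinite if and only if A ≥ 0, B ≥ 0, and there exists a matrix R with operator norm at most 1 such that C = A^{1/2} R B^{1/2}. -/

import Mathlib

open Matrix
open scoped Matrix.Norms.L2Operator ComplexOrder

/-- The positive semidefinite square root of a positive semidefinite matrix
(the definition `Matrix.PosSemidef.sqrt` of the older Mathlib, since removed). -/
noncomputable def Matrix.PosSemidef.sqrt {n : Type*} [Fintype n] [DecidableEq n] {𝕜 : Type*}
    [RCLike 𝕜] {A : Matrix n n 𝕜} (hA : A.PosSemidef) : Matrix n n 𝕜 :=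
  hA.1.eigenvectorUnitary.1 * diagonal ((↑) ∘ (√·) ∘ hA.1.eigenvalues) *
  (star hA.1.eigenvectorUnitary : Matrix n n 𝕜)

section Aux

variable {m : Type*} [Fintype m] [DecidableEq m]

private noncomputable def hcfc {A : Matrix m m ℂ} (hA : A.IsHermitian) (f : ℝ → ℝ) :
    Matrix m m ℂ :=
  hA.eigenvectorUnitary.1 * diagonal ((↑) ∘ f ∘ hA.eigenvalues) *
  (star (hA.eigenvectorUnitary.1 : Matrix m m ℂ))

private lemma cfc_mul_cfc {A : Matrix m m ℂ} (hA : A.IsHermitian) (f g : ℝ → ℝ) :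
    hcfc hA f * hcfc hA g = hcfc hA (fun x => f x * g x) := by
  unfold hcfc
  have h : ∀ (a b c d e f : Matrix m m ℂ), (a * b * c) * (d * e * f) = a * (b * (c * d) * e) * f := by
    intros; simp only [mul_assoc]
  rw [h]
  simp only [SetLike.coe_mem, Unitary.star_mul_self_of_mem, mul_one, diagonal_mul_diagonal]
  congr! with i
  simp

private lemma cfc_isHermitian {A : Matrix m m ℂ} (hA : A.IsHermitian) (f : ℝ → ℝ) :
    (hcfc hA f).IsHermitian := by
  unfold hcfc
  rw [show (star hA.eigenvectorUnitary.1 : Matrix m m ℂ) = (hA.eigenvectorUnitary.1)ᴴ from rfl]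
  exact isHermitian_mul_mul_conjTranspose _
    (isHermitian_diagonal_iff.mpr fun i => RCLike.conj_ofReal _)

private lemma sqrt_eq_cfc {A : Matrix m m ℂ} (hA : A.PosSemidef) :
    hA.sqrt = hcfc hA.1 Real.sqrt := rfl

private lemma Matrix.PosSemidef.sqrt_mul_self {A : Matrix m m ℂ} (hA : A.PosSemidef) :
    hA.sqrt * hA.sqrt = A := by
  rw [sqrt_eq_cfc, cfc_mul_cfc]
  have hfun : (fun x => Real.sqrt x * Real.sqrt x) ∘ hA.1.eigenvalues = hA.1.eigenvalues :=
    funext fun i => Real.mul_self_sqrt (hA.eigenvalues_nonneg i)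
  unfold hcfc
  rw [hfun]
  exact hA.1.spectral_theorem.symm

private lemma Matrix.PosSemidef.posSemidef_sqrt {A : Matrix m m ℂ} (hA : A.PosSemidef) :
    hA.sqrt.PosSemidef := by
  have hd : (diagonal ((↑) ∘ Real.sqrt ∘ hA.1.eigenvalues : m → ℂ)).PosSemidef :=
    posSemidef_diagonal_iff.mpr fun i => Complex.zero_le_real.mpr (Real.sqrt_nonneg _)
  exact hd.mul_mul_conjTranspose_same _

/-- pseudo-inverse of the square root of a PSD matrix -/
private noncomputable def pinv {D : Matrix m m ℂ} (hD : D.PosSemidef) : Matrix m m ℂ :=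
  hcfc hD.1 fun x => (Real.sqrt x)⁻¹

/-- projection onto the range of a PSD matrix -/
private noncomputable def proj {D : Matrix m m ℂ} (hD : D.PosSemidef) : Matrix m m ℂ :=
  hcfc hD.1 fun x => Real.sqrt x * (Real.sqrt x)⁻¹

variable {D : Matrix m m ℂ} (hD : D.PosSemidef)

private lemma pinv_herm : (pinv hD)ᴴ = pinv hD := cfc_isHermitian hD.1 _

private lemma proj_herm : (proj hD)ᴴ = proj hD := cfc_isHermitian hD.1 _

private lemma sqrt_mul_pinv : hD.sqrt * pinv hD = proj hD := by
  rw [sqrt_eq_cfc, pinv, cfc_mul_cfc, proj]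

private lemma pinv_mul_sqrt : pinv hD * hD.sqrt = proj hD := by
  rw [sqrt_eq_cfc, pinv, cfc_mul_cfc, proj]
  have : (fun x : ℝ => (Real.sqrt x)⁻¹ * Real.sqrt x)
      = fun x : ℝ => Real.sqrt x * (Real.sqrt x)⁻¹ := by
    funext x; exact mul_comm _ _
  rw [this]

private lemma proj_idem : proj hD * proj hD = proj hD := by
  rw [proj, cfc_mul_cfc]
  have : (fun x : ℝ => Real.sqrt x * (Real.sqrt x)⁻¹ * (Real.sqrt x * (Real.sqrt x)⁻¹))
      = fun x : ℝ => Real.sqrt x * (Real.sqrt x)⁻¹ := by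
    funext x
    rcases eq_or_ne (Real.sqrt x) 0 with h0 | h0
    · simp [h0]
    · field_simp
  rw [this]

private lemma proj_mul_sqrt : proj hD * hD.sqrt = hD.sqrt := by
  rw [proj, sqrt_eq_cfc, cfc_mul_cfc]
  have : (fun x : ℝ => Real.sqrt x * (Real.sqrt x)⁻¹ * Real.sqrt x)
      = fun x : ℝ => Real.sqrt x := by
    funext x
    rcases eq_or_ne (Real.sqrt x) 0 with h0 | h0
    · simp [h0]
    · field_simp
  rw [this]

private lemma proj_mul_self : proj hD * D = D := by
  calc proj hD * D = proj hD * (hD.sqrt * hD.sqrt) := by rw [hD.sqrt_mul_self]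
    _ = (proj hD * hD.sqrt) * hD.sqrt := by rw [Matrix.mul_assoc]
    _ = hD.sqrt * hD.sqrt := by rw [proj_mul_sqrt]
    _ = D := hD.sqrt_mul_self

private lemma self_mul_proj : D * proj hD = D := by
  have h := congrArg conjTranspose (proj_mul_self hD)
  rwa [conjTranspose_mul, proj_herm, hD.1] at h

private lemma pinv_mul_mul_pinv : pinv hD * D * pinv hD = proj hD := by
  calc pinv hD * D * pinv hD = pinv hD * (hD.sqrt * hD.sqrt) * pinv hD := by
        rw [hD.sqrt_mul_self]
    _ = (pinv hD * hD.sqrt) * (hD.sqrt * pinv hD) := by simp only [Matrix.mul_assoc]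
    _ = proj hD * proj hD := by rw [pinv_mul_sqrt, sqrt_mul_pinv]
    _ = proj hD := proj_idem hD

omit [DecidableEq m] in
private lemma star_dot_self (x : m → ℂ) :
    star x ⬝ᵥ x = ((‖(WithLp.equiv 2 (m → ℂ)).symm x‖ : ℝ) : ℂ) ^ 2 := by
  have := EuclideanSpace.inner_toLp_toLp (𝕜 := ℂ) (ι := m) x x
  rw [inner_self_eq_norm_sq_to_K, dotProduct_comm] at this
  exact this.symm

private lemma one_sub_posSemidef {R : Matrix m m ℂ} (hR : ‖R‖ ≤ 1) :
    (1 - Rᴴ * R).PosSemidef := by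
  rw [posSemidef_iff_dotProduct_mulVec]
  constructor
  · exact isHermitian_one.sub (posSemidef_conjTranspose_mul_self R).1
  · intro x
    have h1 : star x ⬝ᵥ (1 - Rᴴ * R) *ᵥ x
        = star x ⬝ᵥ x - star (R *ᵥ x) ⬝ᵥ (R *ᵥ x) := by
      rw [sub_mulVec, dotProduct_sub, one_mulVec, ← mulVec_mulVec, dotProduct_mulVec,
        star_mulVec]
    rw [h1, star_dot_self x, star_dot_self (R *ᵥ x), ← Complex.ofReal_pow, ← Complex.ofReal_pow,
      ← Complex.ofReal_sub]
    rw [Complex.zero_le_real]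
    have h2 : ‖(WithLp.equiv 2 (m → ℂ)).symm (R *ᵥ x)‖ ≤ ‖R‖ * ‖(WithLp.equiv 2 (m → ℂ)).symm x‖ :=
      R.l2_opNorm_mulVec ((WithLp.equiv 2 (m → ℂ)).symm x)
    have h3 : ‖(WithLp.equiv 2 (m → ℂ)).symm (R *ᵥ x)‖ ≤ ‖(WithLp.equiv 2 (m → ℂ)).symm x‖ := by
      calc _ ≤ ‖R‖ * ‖(WithLp.equiv 2 (m → ℂ)).symm x‖ := h2
        _ ≤ 1 * _ := by gcongr
        _ = _ := one_mul _
    have := pow_le_pow_left₀ (norm_nonneg _) h3 2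
    linarith

/-- norm of a Hermitian idempotent is at most 1 -/
private lemma norm_proj_le_one {P : Matrix m m ℂ} (hP : Pᴴ = P) (hP2 : P * P = P) :
    ‖P‖ ≤ 1 := by
  have h := P.l2_opNorm_conjTranspose_mul_self
  rw [hP, hP2] at h
  nlinarith [norm_nonneg P]

end Aux

/-- A 2n×2n Hermitian block matrix `[[A, C], [Cᴴ, B]]` is positive semidefinite iff
`A ≥ 0`, `B ≥ 0`, and `C = A^{1/2} R B^{1/2}` for some contraction `R` (operator norm ≤ 1). -/
theorem block_posSemidef_iff_contraction {n : ℕ} (A B C : Matrix (Fin n) (Fin n) ℂ) :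
    (Matrix.fromBlocks A C Cᴴ B).PosSemidef ↔
      ∃ (hA : A.PosSemidef) (hB : B.PosSemidef) (R : Matrix (Fin n) (Fin n) ℂ),
        ‖R‖ ≤ 1 ∧ C = hA.sqrt * R * hB.sqrt := by
  constructor
  · intro hM
    have key : hM.sqrt * hM.sqrt = fromBlocks A C Cᴴ B := hM.sqrt_mul_self
    set N := hM.sqrt with hNdef
    have hNH : Nᴴ = N := hM.posSemidef_sqrt.1
    set X : Matrix (Fin n ⊕ Fin n) (Fin n) ℂ := N.submatrix id Sum.inl with hXdef
    set Y : Matrix (Fin n ⊕ Fin n) (Fin n) ℂ := N.submatrix id Sum.inr with hYdef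
    have blk : ∀ a b, (Nᴴ * N) a b = fromBlocks A C Cᴴ B a b := by
      intro a b; rw [hNH, key]
    have hXX : Xᴴ * X = A := by
      ext i j
      have := blk (Sum.inl i) (Sum.inl j)
      simp only [Matrix.mul_apply, conjTranspose_apply, fromBlocks_apply₁₁] at this
      simpa [hXdef, Matrix.mul_apply, conjTranspose_apply, submatrix_apply] using this
    have hXY : Xᴴ * Y = C := by
      ext i j
      have := blk (Sum.inl i) (Sum.inr j)
      simp only [Matrix.mul_apply, conjTranspose_apply, fromBlocks_apply₁₂] at this
      simpa [hXdef, hYdef, Matrix.mul_apply, conjTranspose_apply, submatrix_apply] using this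
    have hYY : Yᴴ * Y = B := by
      ext i j
      have := blk (Sum.inr i) (Sum.inr j)
      simp only [Matrix.mul_apply, conjTranspose_apply, fromBlocks_apply₂₂] at this
      simpa [hYdef, Matrix.mul_apply, conjTranspose_apply, submatrix_apply] using this
    have hA : A.PosSemidef := hXX ▸ posSemidef_conjTranspose_mul_self X
    have hB : B.PosSemidef := hYY ▸ posSemidef_conjTranspose_mul_self Y
    -- the matrices are supported on the ranges of A and B
    have hXπ : X * proj hA = X := by
      have hz : (X * proj hA - X)ᴴ * (X * proj hA - X) = 0 := by
        rw [conjTranspose_sub, conjTranspose_mul, proj_herm, Matrix.sub_mul, Matrix.mul_sub,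
          Matrix.mul_sub]
        simp only [Matrix.mul_assoc]
        have t1 : Xᴴ * (X * proj hA) = A * proj hA := by rw [← Matrix.mul_assoc, hXX]
        rw [t1, hXX, self_mul_proj hA, proj_mul_self hA]
        abel
      have := conjTranspose_mul_self_eq_zero.mp hz
      exact sub_eq_zero.mp this
    have hYπ : Y * proj hB = Y := by
      have hz : (Y * proj hB - Y)ᴴ * (Y * proj hB - Y) = 0 := by
        rw [conjTranspose_sub, conjTranspose_mul, proj_herm, Matrix.sub_mul, Matrix.mul_sub,
          Matrix.mul_sub]
        simp only [Matrix.mul_assoc]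
        have t1 : Yᴴ * (Y * proj hB) = B * proj hB := by rw [← Matrix.mul_assoc, hYY]
        rw [t1, hYY, self_mul_proj hB, proj_mul_self hB]
        abel
      have := conjTranspose_mul_self_eq_zero.mp hz
      exact sub_eq_zero.mp this
    refine ⟨hA, hB, pinv hA * C * pinv hB, ?_, ?_⟩
    · -- the norm bound
      have hXp : pinv hA * C * pinv hB = (X * pinv hA)ᴴ * (Y * pinv hB) := by
        rw [conjTranspose_mul, pinv_herm, ← hXY]
        simp only [Matrix.mul_assoc]
      have k1 : (X * pinv hA)ᴴ * (X * pinv hA) = proj hA := by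
        rw [conjTranspose_mul, pinv_herm]
        calc pinv hA * Xᴴ * (X * pinv hA) = pinv hA * (Xᴴ * X) * pinv hA := by
              simp only [Matrix.mul_assoc]
          _ = pinv hA * A * pinv hA := by rw [hXX]
          _ = proj hA := pinv_mul_mul_pinv hA
      have k2 : (Y * pinv hB)ᴴ * (Y * pinv hB) = proj hB := by
        rw [conjTranspose_mul, pinv_herm]
        calc pinv hB * Yᴴ * (Y * pinv hB) = pinv hB * (Yᴴ * Y) * pinv hB := by
              simp only [Matrix.mul_assoc]
          _ = pinv hB * B * pinv hB := by rw [hYY]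
          _ = proj hB := pinv_mul_mul_pinv hB
      have n1 : ‖X * pinv hA‖ ≤ 1 := by
        have hh := (X * pinv hA).l2_opNorm_conjTranspose_mul_self
        rw [k1] at hh
        have := norm_proj_le_one (proj_herm hA) (proj_idem hA)
        nlinarith [norm_nonneg (X * pinv hA)]
      have n2 : ‖Y * pinv hB‖ ≤ 1 := by
        have hh := (Y * pinv hB).l2_opNorm_conjTranspose_mul_self
        rw [k2] at hh
        have := norm_proj_le_one (proj_herm hB) (proj_idem hB)
        nlinarith [norm_nonneg (Y * pinv hB)]
      rw [hXp]
      calc ‖(X * pinv hA)ᴴ * (Y * pinv hB)‖ ≤ ‖(X * pinv hA)ᴴ‖ * ‖Y * pinv hB‖ :=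
            l2_opNorm_mul _ _
        _ = ‖X * pinv hA‖ * ‖Y * pinv hB‖ := by rw [l2_opNorm_conjTranspose]
        _ ≤ 1 * 1 := mul_le_mul n1 n2 (norm_nonneg _) zero_le_one
        _ = 1 := mul_one 1
    · -- the factorization
      have c1 : proj hA * C = C := by
        rw [← hXY, ← Matrix.mul_assoc]
        congr 1
        calc proj hA * Xᴴ = (X * proj hA)ᴴ := by rw [conjTranspose_mul, proj_herm]
          _ = Xᴴ := by rw [hXπ]
      have c2 : C * proj hB = C := by
        rw [← hXY, Matrix.mul_assoc, hYπ]
      have : hA.sqrt * (pinv hA * C * pinv hB) * hB.sqrt = C := by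
        calc hA.sqrt * (pinv hA * C * pinv hB) * hB.sqrt
            = (hA.sqrt * pinv hA) * (C * (pinv hB * hB.sqrt)) := by
              simp only [Matrix.mul_assoc]
          _ = proj hA * (C * proj hB) := by rw [sqrt_mul_pinv, pinv_mul_sqrt]
          _ = C := by rw [c2, c1]
      exact this.symm
  · rintro ⟨hA, hB, R, hR, hC⟩
    subst hC
    have hS : (hB.sqrt * (1 - Rᴴ * R) * hB.sqrt).PosSemidef := by
      have := (one_sub_posSemidef hR).mul_mul_conjTranspose_same hB.sqrt
      rwa [hB.posSemidef_sqrt.1] at this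
    set T := hS.sqrt with hTdef
    set L : Matrix (Fin n ⊕ Fin n) (Fin n ⊕ Fin n) ℂ :=
      fromBlocks hA.sqrt (R * hB.sqrt) 0 T with hLdef
    have hkey : fromBlocks A (hA.sqrt * R * hB.sqrt) (hA.sqrt * R * hB.sqrt)ᴴ B = Lᴴ * L := by
      rw [hLdef, fromBlocks_conjTranspose, fromBlocks_multiply]
      have hsA : hA.sqrtᴴ = hA.sqrt := hA.posSemidef_sqrt.1
      have hsB : hB.sqrtᴴ = hB.sqrt := hB.posSemidef_sqrt.1
      have hT : Tᴴ = T := hS.posSemidef_sqrt.1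
      have hTT : T * T = hB.sqrt * (1 - Rᴴ * R) * hB.sqrt := hS.sqrt_mul_self
      rw [conjTranspose_zero, hsA, hT]
      simp only [Matrix.zero_mul, Matrix.mul_zero, add_zero, hA.sqrt_mul_self, hTT]
      have e12 : hA.sqrt * (R * hB.sqrt) = hA.sqrt * R * hB.sqrt := (Matrix.mul_assoc _ _ _).symm
      have e21 : (R * hB.sqrt)ᴴ * hA.sqrt = (hA.sqrt * R * hB.sqrt)ᴴ := by
        rw [conjTranspose_mul, conjTranspose_mul, conjTranspose_mul, hsA, hsB]
        noncomm_ring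
      have e22 : (R * hB.sqrt)ᴴ * (R * hB.sqrt) + hB.sqrt * (1 - Rᴴ * R) * hB.sqrt = B := by
        rw [conjTranspose_mul, hsB]
        calc hB.sqrt * Rᴴ * (R * hB.sqrt) + hB.sqrt * (1 - Rᴴ * R) * hB.sqrt
            = hB.sqrt * hB.sqrt := by noncomm_ring
          _ = B := hB.sqrt_mul_self
      rw [e12, e21, e22]
    rw [hkey]
    exact posSemidef_conjTranspose_mul_self L
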